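/- Let (m_n)_{n∈ℕ} be a sequence of positive reals and consider the BPVE with geometric offspring distributions ρ_n(i) := m_n^i/(1+m_n)^{i+1} for i ∈ ℕ (whose generating function is Φ_n(z) = 1/(1+m_n(1−z)) and whose first moment is m_n). If ∑_{n=0}^∞ (∏_{j=0}^{n} m_j)^{−1} < ∞, then the BPVE survives, i.e. p_e < 1. -/

import Mathlib

open Filter ENNReal

/-- Probability generating function `Φ_n(z) := ∑_i ρ_n(i) z^i` of the `n`-th offspring
distribution of a branching process in varying environment (BPVE). -/
noncomputable def Phi (ρ : ℕ → ℕ → ℝ) (n : ℕ) (z : ℝ) : ℝ :=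
  ∑' i : ℕ, ρ n i * z ^ i

/-- The iterated generating functions `H_0(z) := z`, `H_{n+1} := H_n ∘ Φ_n`;
`H_n(0)` is the probability of extinction by generation `n`, and the extinction
probability is `p_e = lim_n H_n(0)`. -/
noncomputable def Hseq (ρ : ℕ → ℕ → ℝ) : ℕ → ℝ → ℝ
  | 0 => fun z => z
  | n + 1 => fun z => Hseq ρ n (Phi ρ n z)

/-- First moment `m_n := ∑_i i ρ_n(i) ∈ [0,∞]` of the `n`-th offspring distribution. -/
noncomputable def mom (ρ : ℕ → ℕ → ℝ) (n : ℕ) : ℝ≥0∞ :=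
  ∑' i : ℕ, (i : ℝ≥0∞) * ENNReal.ofReal (ρ n i)

/-- Second moment `m_n⁽²⁾ := ∑_i i² ρ_n(i) ∈ [0,∞]` of the `n`-th offspring
distribution. -/
noncomputable def mom2 (ρ : ℕ → ℕ → ℝ) (n : ℕ) : ℝ≥0∞ :=
  ∑' i : ℕ, (i : ℝ≥0∞) ^ 2 * ENNReal.ofReal (ρ n i)

lemma key_alg (a b mn z : ℝ) (hb : 0 < b) (ha : 0 ≤ a) (hmn : 0 < mn) (hz : z < 1) :
    1 - (1 - (1 + mn * (1 - z))⁻¹) / (a * (1 - (1 + mn * (1 - z))⁻¹) + b) =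
    1 - (1 - z) / ((a + b) * (1 - z) + b / mn) := by
  have hd : (0:ℝ) < 1 + mn * (1 - z) := by nlinarith
  have hw1 : (1 + mn * (1 - z))⁻¹ < 1 := by
    rw [inv_lt_one_iff₀]; right; nlinarith
  have hDw : (0:ℝ) < a * (1 - (1 + mn * (1 - z))⁻¹) + b := by nlinarith
  have hDz : (0:ℝ) < (a + b) * (1 - z) + b / mn := by
    have h1 : 0 < b / mn := by positivity
    nlinarith
  field_simp
  ring

/-- the BPVE with geometric offspring distributions
`ρ_n(i) = m_n^i/(1+m_n)^{i+1}` (first moment `m_n`) survives whenever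
`∑_n (∏_{j=0}^n m_j)⁻¹ < ∞`. -/
theorem geometric_bpve_survival (m : ℕ → ℝ) (hm : ∀ n, 0 < m n)
    (hsum : Summable fun n => (∏ j ∈ Finset.range (n + 1), m j)⁻¹)
    (pe : ℝ)
    (hpe : Tendsto
      (fun n => Hseq (fun n i => m n ^ i / (1 + m n) ^ (i + 1)) n 0) atTop (nhds pe)) :
    pe < 1 := by
  set ρ : ℕ → ℕ → ℝ := fun n i => m n ^ i / (1 + m n) ^ (i + 1) with hρ
  set B : ℕ → ℝ := fun n => (∏ j ∈ Finset.range n, m j)⁻¹ with hB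
  set A : ℕ → ℝ := fun n => ∑ k ∈ Finset.range n, B k with hA
  have hBpos : ∀ n, 0 < B n := fun n => inv_pos.2 (Finset.prod_pos fun j _ => hm j)
  have hAnonneg : ∀ n, 0 ≤ A n := fun n => Finset.sum_nonneg fun k _ => (hBpos _).le
  have hPhi : ∀ n z, 0 ≤ z → z < 1 → Phi ρ n z = (1 + m n * (1 - z))⁻¹ := by
    intro n z hz0 hz1
    have hm1 : (0:ℝ) < 1 + m n := by linarith [hm n]
    have hr0 : 0 ≤ m n * z / (1 + m n) :=
      div_nonneg (mul_nonneg (hm n).le hz0) hm1.le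
    have hr1 : m n * z / (1 + m n) < 1 := by
      rw [div_lt_one hm1]; nlinarith [hm n]
    have hterm : ∀ i : ℕ, ρ n i * z ^ i = (1 + m n)⁻¹ * (m n * z / (1 + m n)) ^ i := by
      intro i
      simp only [hρ]
      rw [div_pow, mul_pow, pow_succ]
      field_simp
    have hd : (0:ℝ) < 1 + m n * (1 - z) := by nlinarith [hm n]
    rw [Phi]
    simp_rw [hterm]
    rw [tsum_mul_left, tsum_geometric_of_lt_one hr0 hr1]
    rw [eq_comm, inv_eq_iff_eq_inv]
    have h2 : (1:ℝ) - m n * z / (1 + m n) ≠ 0 := by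
      intro h; nlinarith [hm n]
    field_simp
    ring
  have hH : ∀ n, ∀ z : ℝ, 0 ≤ z → z < 1 →
      Hseq ρ n z = 1 - (1 - z) / (A n * (1 - z) + B n) := by
    intro n
    induction n with
    | zero => intro z hz0 hz1; simp [Hseq, hA, hB]
    | succ n ih =>
      intro z hz0 hz1
      have hd : (0:ℝ) < 1 + m n * (1 - z) := by nlinarith [hm n]
      have hstep : Hseq ρ (n+1) z = Hseq ρ n ((1 + m n * (1 - z))⁻¹) := by
        rw [show Hseq ρ (n+1) z = Hseq ρ n (Phi ρ n z) from rfl, hPhi n z hz0 hz1]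
      have hw0 : 0 ≤ (1 + m n * (1 - z))⁻¹ := by positivity
      have hw1 : (1 + m n * (1 - z))⁻¹ < 1 := by
        rw [inv_lt_one_iff₀]; right; nlinarith [hm n]
      rw [hstep, ih _ hw0 hw1]
      have hBsucc : B (n+1) = B n / m n := by
        simp only [hB, Finset.prod_range_succ, mul_inv]
        rw [div_eq_mul_inv]
      have hAsucc : A (n+1) = A n + B n := by
        simp [hA, Finset.sum_range_succ]
      rw [hAsucc, hBsucc]
      exact key_alg (A n) (B n) (m n) z (hBpos n) (hAnonneg n) (hm n) hz1
  set T : ℝ := ∑' n, (∏ j ∈ Finset.range (n + 1), m j)⁻¹ with hT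
  have hterm_nonneg : ∀ k : ℕ, 0 ≤ (∏ j ∈ Finset.range (k + 1), m j)⁻¹ :=
    fun k => (hBpos (k+1)).le
  have hT0 : 0 ≤ T := tsum_nonneg hterm_nonneg
  have hA_le : ∀ n, A n ≤ 1 + T := by
    intro n
    cases n with
    | zero => simp [hA]; linarith
    | succ k =>
      have : A (k+1) = (∑ i ∈ Finset.range k, B (i+1)) + B 0 := by
        rw [hA]; exact Finset.sum_range_succ' B k
      rw [this]
      have h1 : (∑ i ∈ Finset.range k, B (i+1)) ≤ T :=
        Summable.sum_le_tsum (Finset.range k) (fun i _ => hterm_nonneg i) hsum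
      have h2 : B 0 = 1 := by simp [hB]
      linarith
  have hB_le : ∀ n, B n ≤ 1 + T := by
    intro n
    cases n with
    | zero => simp [hB]; linarith
    | succ k =>
      have := Summable.le_tsum hsum k (fun j _ => hterm_nonneg j)
      calc B (k+1) ≤ T := this
        _ ≤ 1 + T := by linarith
  set C : ℝ := 2 + 2 * T with hC
  have hCpos : (0:ℝ) < C := by linarith
  have hbound : ∀ n, Hseq ρ n 0 ≤ 1 - 1 / C := by
    intro n
    have h := hH n 0 le_rfl one_pos
    have hD : 0 < A n * (1 - 0) + B n := by nlinarith [hBpos n, hAnonneg n]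
    have hDC : A n * (1 - 0) + B n ≤ C := by
      have := hA_le n; have := hB_le n
      rw [hC]; nlinarith
    rw [h]
    have h1 : 1 / C ≤ (1 - 0) / (A n * (1 - 0) + B n) := by
      rw [div_le_div_iff₀ hCpos hD]
      linarith
    linarith
  have hpele : pe ≤ 1 - 1 / C :=
    le_of_tendsto hpe (Filter.Eventually.of_forall hbound)
  have : 0 < 1 / C := by positivity
  linarith
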